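/- In the polynomial ring 𝔽₇[t₁,…,t₈][x₁₂,x₁₃,x₁₄,x₁₅,x₂₃,x₂₄,x₂₅,x₃₄,x₃₅,x₄₅], let Q = t₁x₂₄x₃₄ + t₂x₁₂x₁₅ + t₃x₁₃x₃₅ + t₄x₂₅² + t₅x₂₅x₄₅ + t₆x₁₄x₁₅ + t₇x₄₅² + t₈x₂₃x₂₄. At the point of 𝔽₇[t₁,…,t₈]¹⁰ with x₁₂ = t₆, x₁₄ = −t₂ and all other coordinates equal to 0: Q vanishes, all five Plücker quadrics q₁,…,q₅ vanish, and all ten partial derivatives ∂Q/∂x_{ij} vanish. (Hence this point of ℙ⁹ is a singular point of Gr(2,5) ∩ {Q = 0} over 𝔽₇(t₁,…,t₈).) -/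
import Mathlib


noncomputable section

open MvPolynomial

/-- The coefficient ring `𝔽₇[t₁,…,t₈]`. -/
abbrev R18 : Type := MvPolynomial (Fin 8) (ZMod 7)

/-- The parameter `tᵢ`, viewed as a constant in
`𝔽₇[t₁,…,t₈][x₁₂,x₁₃,x₁₄,x₁₅,x₂₃,x₂₄,x₂₅,x₃₄,x₃₅,x₄₅]`
(the ten Plücker variables are indexed `0,…,9` in the displayed order). -/
def T18 (i : Fin 8) : MvPolynomial (Fin 10) R18 := C (X i)

/-- `Q = t₁x₂₄x₃₄ + t₂x₁₂x₁₅ + t₃x₁₃x₃₅ + t₄x₂₅² + t₅x₂₅x₄₅ + t₆x₁₄x₁₅ + t₇x₄₅²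
  + t₈x₂₃x₂₄`. -/
def Q18 : MvPolynomial (Fin 10) R18 :=
  T18 0 * (X 5 * X 7) + T18 1 * (X 0 * X 3) + T18 2 * (X 1 * X 8) + T18 3 * (X 6 * X 6) +
  T18 4 * (X 6 * X 9) + T18 5 * (X 2 * X 3) + T18 6 * (X 9 * X 9) + T18 7 * (X 4 * X 5)

/-- The five Plücker quadrics `q₁,…,q₅` in the variables
`x₁₂,x₁₃,x₁₄,x₁₅,x₂₃,x₂₄,x₂₅,x₃₄,x₃₅,x₄₅` (indexed `0,…,9`). -/
def plucker18 : Fin 5 → MvPolynomial (Fin 10) R18 :=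
  ![X 4 * X 9 - X 5 * X 8 + X 6 * X 7,
    X 1 * X 9 - X 2 * X 8 + X 3 * X 7,
    X 0 * X 9 - X 2 * X 6 + X 3 * X 5,
    X 0 * X 8 - X 1 * X 6 + X 3 * X 4,
    X 0 * X 7 - X 1 * X 5 + X 2 * X 4]

/-- The point with `x₁₂ = t₆`, `x₁₄ = −t₂` and all other coordinates zero. -/
def pt18 : Fin 10 → R18 :=
  ![X 5, 0, -(X 1), 0, 0, 0, 0, 0, 0, 0]

lemma pt18_eq : ∀ i, pt18 i = ![X 5, 0, -(X 1), 0, 0, 0, 0, 0, 0, 0] i := fun _ => rfl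

lemma pt18_0 : pt18 0 = X 5 := rfl
lemma pt18_1 : pt18 1 = 0 := rfl
lemma pt18_2 : pt18 2 = -(X 1) := rfl
lemma pt18_3 : pt18 3 = 0 := rfl
lemma pt18_4 : pt18 4 = 0 := rfl
lemma pt18_5 : pt18 5 = 0 := rfl
lemma pt18_6 : pt18 6 = 0 := rfl
lemma pt18_7 : pt18 7 = 0 := rfl
lemma pt18_8 : pt18 8 = 0 := rfl
lemma pt18_9 : pt18 9 = 0 := rfl

set_option maxHeartbeats 2000000 in
/-- At the point `x₁₂ = t₆`, `x₁₄ = −t₂` (all other coordinates `0`), the quadric `Q`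
of family (5) for `p = 7` vanishes, all five Plücker quadrics vanish, and all ten partial
derivatives of `Q` vanish: this point is a singular point of `Gr(2,5) ∩ {Q = 0}`. -/
theorem family5_p7_singular_point :
    eval pt18 Q18 = 0 ∧
    (∀ j : Fin 5, eval pt18 (plucker18 j) = 0) ∧
    (∀ i : Fin 10, eval pt18 (pderiv i Q18) = 0) := by
  refine ⟨?_, ?_, ?_⟩
  · simp [Q18, T18, pt18_0, pt18_1, pt18_2, pt18_3, pt18_4, pt18_5, pt18_6, pt18_7,
      pt18_8, pt18_9]
  · intro j
    fin_cases j <;>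
      simp [plucker18, pt18_0, pt18_1, pt18_2, pt18_3, pt18_4, pt18_5, pt18_6, pt18_7,
        pt18_8, pt18_9]
  · intro i
    fin_cases i <;>
      simp [Q18, T18, pderiv_mul, pderiv_X, Pi.single_apply, pt18_0, pt18_1, pt18_2, pt18_3,
        pt18_4, pt18_5, pt18_6, pt18_7, pt18_8, pt18_9] <;> ring
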